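/- Similarly, if f ∈ C^{α(·)}(Ω̄_T) (variable Hölder continuous with respect to the parabolic metric), then the function f̃ defined on Ω × (-σ², T+σ²) by f̃(x,t) = f(x, min(max(t,0),T)) belongs to C^{α̃(·)} with norm bounded by C·|f|_{0,α(·),Ω_T}, where α̃ is the corresponding time-constant extension of α. -/
import Mathlib


open Real Set

/-- The parabolic distance on `ℝⁿ × ℝ`. -/
noncomputable def pd {n : ℕ} (P Q : (Fin n → ℝ) × ℝ) : ℝ :=
  max ‖P.1 - Q.1‖ (Real.sqrt |P.2 - Q.2|)

/-- Time-constant extension of a variable Hölder function: if `f` is bounded by `B`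
and Hölder with constant `K` and exponent `α(·)` on `Ω × [0,T]`, then the extension
`f̃(x,t) = f(x, min(max(t,0),T))` is Hölder with exponent `α̃(x,t) = α(x, clamp t)`
on `Ω × (-σ², T+σ²)`, with constant `C (K + B)`, `C` depending only on the data. -/
theorem holder_time_extension (n : ℕ) (Ω : Set (Fin n → ℝ))
    (hΩ : Bornology.IsBounded Ω) (T σ : ℝ) (hT : 0 < T) (hσ : 0 < σ)
    (α : (Fin n → ℝ) × ℝ → ℝ)
    (hα : ∀ P ∈ Ω ×ˢ Icc 0 T, α P ∈ Ioc (0:ℝ) 1)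
    (M : ℝ) (hM : 0 < M)
    (hlog : ∀ P ∈ Ω ×ˢ Icc 0 T, ∀ Q ∈ Ω ×ˢ Icc 0 T, P ≠ Q →
      |α P - α Q| * |Real.log (pd P Q)| ≤ M)
    (f : (Fin n → ℝ) × ℝ → ℝ) (K B : ℝ) (hK : 0 ≤ K) (hB : 0 ≤ B)
    (hf : ∀ P ∈ Ω ×ˢ Icc 0 T, ∀ Q ∈ Ω ×ˢ Icc 0 T,
      |f P - f Q| ≤ K * pd P Q ^ α Q)
    (hfb : ∀ P ∈ Ω ×ˢ Icc 0 T, |f P| ≤ B) :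
    ∃ C > (0:ℝ),
      ∀ P ∈ Ω ×ˢ Ioo (-σ ^ 2) (T + σ ^ 2), ∀ Q ∈ Ω ×ˢ Ioo (-σ ^ 2) (T + σ ^ 2),
        |f (P.1, min (max P.2 0) T) - f (Q.1, min (max Q.2 0) T)| ≤
          C * (K + B) * pd P Q ^ α (Q.1, min (max Q.2 0) T) := by
  refine ⟨1, one_pos, ?_⟩
  rintro ⟨x, t⟩ ⟨hx, ht⟩ ⟨y, s⟩ ⟨hy, hs⟩
  set t' := min (max t 0) T with ht'
  set s' := min (max s 0) T with hs'
  have hclamp : ∀ u : ℝ, min (max u 0) T ∈ Icc (0:ℝ) T := fun u =>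
    ⟨le_min (le_max_right _ _) hT.le, min_le_right _ _⟩
  have hPm : ((x, t') : (Fin n → ℝ) × ℝ) ∈ Ω ×ˢ Icc 0 T := ⟨hx, hclamp t⟩
  have hQm : ((y, s') : (Fin n → ℝ) × ℝ) ∈ Ω ×ˢ Icc 0 T := ⟨hy, hclamp s⟩
  have hαQ := hα _ hQm
  have hts : |t' - s'| ≤ |t - s| := by
    calc |t' - s'| ≤ max |max t 0 - max s 0| |T - T| := abs_min_sub_min_le_max _ _ _ _
    _ ≤ |t - s| := by
        simp only [sub_self, abs_zero]
        exact max_le ((abs_max_sub_max_le_abs _ _ _)) (abs_nonneg _)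
  have hpd : pd ((x, t') : (Fin n → ℝ) × ℝ) ((y, s')) ≤ pd ((x, t) : (Fin n → ℝ) × ℝ) ((y, s)) := by
    unfold pd
    exact max_le_max le_rfl (Real.sqrt_le_sqrt hts)
  have hpd0 : 0 ≤ pd ((x, t') : (Fin n → ℝ) × ℝ) ((y, s')) :=
    le_trans (Real.sqrt_nonneg _) (le_max_right _ _)
  calc |f (x, t') - f (y, s')| ≤ K * pd ((x, t') : (Fin n → ℝ) × ℝ) ((y, s')) ^ α (y, s') :=
        hf _ hPm _ hQm
    _ ≤ 1 * (K + B) * pd ((x, t) : (Fin n → ℝ) × ℝ) ((y, s)) ^ α (y, s') := by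
        rw [one_mul]
        exact mul_le_mul (by linarith) (Real.rpow_le_rpow hpd0 hpd hαQ.1.le)
          (Real.rpow_nonneg hpd0 _) (by linarith)
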